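/- Let G be a (C4, diamond)-free graph with no clique cutset, let w be a weight function on G with w(G) = 1, and let c ∈ [1/2, 1). Let S be a smooth collection of separations of G, let β be the central bag for S (the intersection over S ∈ S of B(S) ∪ C(S)), and let w_S be the inherited weight function on β. If X ⊆ β is a (w_S, c)-balanced separator of β, then Y = X ∪ (N[X ∩ v(S)] ∩ β) is a (w, c)-balanced separator of G. -/

import Mathlib

open SimpleGraph Set

namespace Paper

variable {V : Type} {W : Type}

/-- X and Y are anticomplete: no edge between them. -/
def Anticomplete (G : SimpleGraph V) (X Y : Set V) : Prop :=
  ∀ x ∈ X, ∀ y ∈ Y, ¬ G.Adj x y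

/-- Closed neighborhood N[v]. -/
def closedNbr (G : SimpleGraph V) (v : V) : Set V := insert v (G.neighborSet v)

/-- Open neighborhood N(X) of a set of vertices. -/
def setNbr (G : SimpleGraph V) (X : Set V) : Set V :=
  {v | v ∉ X ∧ ∃ x ∈ X, G.Adj x v}

/-- Closed neighborhood N[X] of a set of vertices. -/
def closedNbrSet (G : SimpleGraph V) (X : Set V) : Set V := X ∪ setNbr G X

/-- D is a connected component of the subgraph of G induced on S. -/
def IsComponentOf (G : SimpleGraph V) (S D : Set V) : Prop :=
  D.Nonempty ∧ D ⊆ S ∧ (G.induce D).Connected ∧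
    ∀ D' : Set V, D ⊆ D' → D' ⊆ S → (G.induce D').Connected → D' = D

/-- G contains no induced copy of H. -/
def HFree (G : SimpleGraph V) (H : SimpleGraph W) : Prop :=
  ∀ s : Set V, ¬ Nonempty ((G.induce s) ≃g H)

/-- The diamond: K₄ minus the edge 01. -/
def diamond : SimpleGraph (Fin 4) :=
  SimpleGraph.fromRel (fun x y => s(x, y) ≠ s(0, 1))

/-- H is a hole of G: an induced cycle of length at least 4. -/
def IsHole (G : SimpleGraph V) (H : Set V) : Prop :=
  ∃ n, 4 ≤ n ∧ Nonempty ((G.induce H) ≃g cycleGraph n)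

/-- H is an even hole of G. -/
def IsEvenHole (G : SimpleGraph V) (H : Set V) : Prop :=
  ∃ n, 4 ≤ n ∧ Even n ∧ Nonempty ((G.induce H) ≃g cycleGraph n)

/-- (H, w) is a wheel: a hole plus a vertex with ≥ 3 pairwise non-adjacent neighbors in H. -/
def IsWheel (G : SimpleGraph V) (H : Set V) (w : V) : Prop :=
  IsHole G H ∧ ∃ x y z, x ∈ H ∩ G.neighborSet w ∧ y ∈ H ∩ G.neighborSet w ∧
    z ∈ H ∩ G.neighborSet w ∧ x ≠ y ∧ x ≠ z ∧ y ≠ z ∧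
    ¬ G.Adj x y ∧ ¬ G.Adj x z ∧ ¬ G.Adj y z

/-- (H, v) is a line wheel: N(v) ∩ H is a union of two disjoint edges. -/
def IsLineWheel (G : SimpleGraph V) (H : Set V) (v : V) : Prop :=
  IsHole G H ∧ v ∉ H ∧ ∃ a b c d : V,
    a ≠ b ∧ a ≠ c ∧ a ≠ d ∧ b ≠ c ∧ b ≠ d ∧ c ≠ d ∧
    G.neighborSet v ∩ H = {a, b, c, d} ∧
    G.Adj a b ∧ G.Adj c d ∧ ¬ G.Adj a c ∧ ¬ G.Adj a d ∧ ¬ G.Adj b c ∧ ¬ G.Adj b d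

/-- An even wheel: a line wheel, or a wheel with an even number of neighbors in the hole,
not forming a path of length one. -/
def IsEvenWheel (G : SimpleGraph V) (H : Set V) (v : V) : Prop :=
  IsLineWheel G H v ∨
    (IsWheel G H v ∧ Even ((G.neighborSet v ∩ H).ncard) ∧
      ¬ ∃ a b, a ≠ b ∧ G.Adj a b ∧ G.neighborSet v ∩ H = {a, b})

/-- The set of vertices of a walk. -/
def suppSet (G : SimpleGraph V) {a b : V} (p : G.Walk a b) : Set V :=
  {v | v ∈ p.support}

/-- A walk is induced: the only adjacencies among its vertices are its own edges. -/
def InducedWalk (G : SimpleGraph V) {a b : V} (p : G.Walk a b) : Prop :=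
  ∀ u v, u ∈ p.support → v ∈ p.support → G.Adj u v → s(u, v) ∈ p.edges

/-- The interior of a walk: its vertices except the two endpoints. -/
def wInterior (G : SimpleGraph V) {a b : V} (p : G.Walk a b) : Set V :=
  {v | v ∈ p.support ∧ v ≠ a ∧ v ≠ b}

/-- G contains a theta as an induced subgraph. -/
def ContainsTheta (G : SimpleGraph V) : Prop :=
  ∃ (a b : V) (p₁ p₂ p₃ : G.Walk a b),
    ¬ G.Adj a b ∧
    p₁.IsPath ∧ p₂.IsPath ∧ p₃.IsPath ∧
    InducedWalk G p₁ ∧ InducedWalk G p₂ ∧ InducedWalk G p₃ ∧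
    2 ≤ p₁.length ∧ 2 ≤ p₂.length ∧ 2 ≤ p₃.length ∧
    Disjoint (wInterior G p₁) (wInterior G p₂) ∧
    Disjoint (wInterior G p₁) (wInterior G p₃) ∧
    Disjoint (wInterior G p₂) (wInterior G p₃) ∧
    Anticomplete G (wInterior G p₁) (wInterior G p₂) ∧
    Anticomplete G (wInterior G p₁) (wInterior G p₃) ∧
    Anticomplete G (wInterior G p₂) (wInterior G p₃)

/-- G contains a pyramid as an induced subgraph. -/
def ContainsPyramid (G : SimpleGraph V) : Prop :=
  ∃ (a b₁ b₂ b₃ : V) (p₁ : G.Walk a b₁) (p₂ : G.Walk a b₂) (p₃ : G.Walk a b₃),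
    G.Adj b₁ b₂ ∧ G.Adj b₁ b₃ ∧ G.Adj b₂ b₃ ∧
    p₁.IsPath ∧ p₂.IsPath ∧ p₃.IsPath ∧
    InducedWalk G p₁ ∧ InducedWalk G p₂ ∧ InducedWalk G p₃ ∧
    1 ≤ p₁.length ∧ 1 ≤ p₂.length ∧ 1 ≤ p₃.length ∧
    ((2 ≤ p₁.length ∧ 2 ≤ p₂.length) ∨ (2 ≤ p₁.length ∧ 2 ≤ p₃.length) ∨
      (2 ≤ p₂.length ∧ 2 ≤ p₃.length)) ∧
    Disjoint (suppSet G p₁ \ {a}) (suppSet G p₂ \ {a}) ∧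
    Disjoint (suppSet G p₁ \ {a}) (suppSet G p₃ \ {a}) ∧
    Disjoint (suppSet G p₂ \ {a}) (suppSet G p₃ \ {a}) ∧
    (∀ u v, u ∈ suppSet G p₁ \ {a} → v ∈ suppSet G p₂ \ {a} → G.Adj u v →
      u = b₁ ∧ v = b₂) ∧
    (∀ u v, u ∈ suppSet G p₁ \ {a} → v ∈ suppSet G p₃ \ {a} → G.Adj u v →
      u = b₁ ∧ v = b₃) ∧
    (∀ u v, u ∈ suppSet G p₂ \ {a} → v ∈ suppSet G p₃ \ {a} → G.Adj u v →
      u = b₂ ∧ v = b₃)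

/-- G contains a prism as an induced subgraph. -/
def ContainsPrism (G : SimpleGraph V) : Prop :=
  ∃ (a₁ a₂ a₃ b₁ b₂ b₃ : V) (p₁ : G.Walk a₁ b₁) (p₂ : G.Walk a₂ b₂) (p₃ : G.Walk a₃ b₃),
    G.Adj a₁ a₂ ∧ G.Adj a₁ a₃ ∧ G.Adj a₂ a₃ ∧
    G.Adj b₁ b₂ ∧ G.Adj b₁ b₃ ∧ G.Adj b₂ b₃ ∧
    p₁.IsPath ∧ p₂.IsPath ∧ p₃.IsPath ∧
    InducedWalk G p₁ ∧ InducedWalk G p₂ ∧ InducedWalk G p₃ ∧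
    Disjoint (suppSet G p₁) (suppSet G p₂) ∧
    Disjoint (suppSet G p₁) (suppSet G p₃) ∧
    Disjoint (suppSet G p₂) (suppSet G p₃) ∧
    (∀ u v, u ∈ suppSet G p₁ → v ∈ suppSet G p₂ → G.Adj u v →
      s(u, v) = s(a₁, a₂) ∨ s(u, v) = s(b₁, b₂)) ∧
    (∀ u v, u ∈ suppSet G p₁ → v ∈ suppSet G p₃ → G.Adj u v →
      s(u, v) = s(a₁, a₃) ∨ s(u, v) = s(b₁, b₃)) ∧
    (∀ u v, u ∈ suppSet G p₂ → v ∈ suppSet G p₃ → G.Adj u v →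
      s(u, v) = s(a₂, a₃) ∨ s(u, v) = s(b₂, b₃))

/-- G has a clique cutset. -/
def HasCliqueCutset (G : SimpleGraph V) : Prop :=
  ∃ C : Set V, G.IsClique C ∧ ¬ (G.induce Cᶜ).Preconnected

/-- (A, C, B) is a separation of G. -/
def IsSeparation (G : SimpleGraph V) (A C B : Set V) : Prop :=
  A ∪ C ∪ B = Set.univ ∧ Disjoint A C ∧ Disjoint A B ∧ Disjoint C B ∧
    Anticomplete G A B

/-- The weight of a set of vertices. -/
noncomputable def fweight (w : V → ℝ) (X : Set V) : ℝ := ∑ᶠ x ∈ X, w x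

/-- X is a (w, c)-balanced separator of G. -/
def IsBalSep (G : SimpleGraph V) (w : V → ℝ) (c : ℝ) (X : Set V) : Prop :=
  ∀ D, IsComponentOf G Xᶜ D → fweight w D ≤ c

/-- The treewidth of G is at most k. -/
def TreewidthLE (G : SimpleGraph V) (k : ℕ) : Prop :=
  ∃ (T : Type) (tG : SimpleGraph T) (χ : T → Set V),
    tG.IsTree ∧
    (∀ v, ∃ t, v ∈ χ t) ∧
    (∀ u v, G.Adj u v → ∃ t, u ∈ χ t ∧ v ∈ χ t) ∧
    (∀ v, (tG.induce {t | v ∈ χ t}).Connected) ∧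
    ∀ t, (χ t).ncard ≤ k + 1

/-- The Ramsey number R(t, s). -/
noncomputable def ramsey (t s : ℕ) : ℕ :=
  sInf {n | ∀ G : SimpleGraph (Fin n), ¬ G.CliqueFree t ∨ ¬ Gᶜ.CliqueFree s}

/-- (H, v) is a twin wheel: N(v) ∩ H is a path of length two. -/
def IsTwinWheel (G : SimpleGraph V) (H : Set V) (v : V) : Prop :=
  IsHole G H ∧ ∃ a b c : V, a ≠ b ∧ a ≠ c ∧ b ≠ c ∧
    G.neighborSet v ∩ H = {a, b, c} ∧ G.Adj a b ∧ G.Adj b c ∧ ¬ G.Adj a c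

/-- (H, v) is a short pyramid: v has exactly three neighbors in H, exactly two adjacent. -/
def IsShortPyramid (G : SimpleGraph V) (H : Set V) (v : V) : Prop :=
  IsHole G H ∧ ∃ a b c : V, a ≠ b ∧ a ≠ c ∧ b ≠ c ∧
    G.neighborSet v ∩ H = {a, b, c} ∧ G.Adj a b ∧ ¬ G.Adj a c ∧ ¬ G.Adj b c

/-- A proper wheel: a wheel that is neither a twin wheel nor a short pyramid. -/
def IsProperWheel (G : SimpleGraph V) (H : Set V) (v : V) : Prop :=
  IsWheel G H v ∧ ¬ IsTwinWheel G H v ∧ ¬ IsShortPyramid G H v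

/-- A universal wheel: v is complete to H. -/
def IsUniversalWheel (G : SimpleGraph V) (H : Set V) (v : V) : Prop :=
  IsWheel G H v ∧ H ⊆ G.neighborSet v



section Helpers

variable {G : SimpleGraph V} {s D E Cs : Set V}

private lemma induce_invariant' (hc : (G.induce s).Connected)
    (Q : V → Prop) {u : V} (hu : u ∈ s) (hQu : Q u)
    (hstep : ∀ a b, a ∈ s → b ∈ s → G.Adj a b → Q a → Q b) :
    ∀ v ∈ s, Q v := by
  have key : ∀ {a b : s} (_ : (G.induce s).Walk a b), Q a → Q b := by
    intro a b p
    induction p with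
    | nil => exact id
    | cons h p ih => exact fun hq => ih (hstep _ _ (by simp) (by simp) h hq)
  intro v hv
  obtain ⟨p⟩ := hc.preconnected ⟨u, hu⟩ ⟨v, hv⟩
  exact key p hQu

private lemma conn_singleton' (x : V) : (G.induce ({x} : Set V)).Connected := by
  rw [SimpleGraph.connected_iff]
  refine ⟨fun a b => ?_, ⟨⟨x, rfl⟩⟩⟩
  have : a = b := Subtype.ext (by rw [a.2, b.2])
  exact this ▸ SimpleGraph.Reachable.refl a

private lemma conn_mono_reach' {t : Set V} (h : s ⊆ t) {a b : s}
    (r : (G.induce s).Reachable a b) :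
    (G.induce t).Reachable ⟨a, h a.2⟩ ⟨b, h b.2⟩ := by
  have := r.map (G.induceHomOfLE h).toHom
  exact this

private lemma conn_insert' (hc : (G.induce D).Connected) {x y : V} (hx : x ∈ D)
    (hxy : G.Adj x y) : (G.induce (insert y D)).Connected := by
  rw [SimpleGraph.connected_iff]
  have hsub : D ⊆ insert y D := subset_insert _ _
  have hxmem : x ∈ insert y D := mem_insert_of_mem _ hx
  have hymem : y ∈ insert y D := mem_insert _ _
  have hreach : ∀ a : (insert y D : Set V),
      (G.induce (insert y D)).Reachable a ⟨x, hxmem⟩ := by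
    rintro ⟨a, ha⟩
    rcases ha with rfl | ha
    · exact SimpleGraph.Adj.reachable (by exact hxy.symm)
    · exact conn_mono_reach' hsub (hc.preconnected ⟨a, ha⟩ ⟨x, hx⟩)
  exact ⟨fun a b => (hreach a).trans (hreach b).symm, ⟨⟨x, hxmem⟩⟩⟩

private lemma conn_union' (hcD : (G.induce D).Connected) (hcE : (G.induce E).Connected)
    (hne : (D ∩ E).Nonempty) : (G.induce (D ∪ E)).Connected := by
  obtain ⟨x, hxD, hxE⟩ := hne
  rw [SimpleGraph.connected_iff]
  have hx : x ∈ D ∪ E := Or.inl hxD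
  have hreach : ∀ a : (D ∪ E : Set V), (G.induce (D ∪ E)).Reachable a ⟨x, hx⟩ := by
    rintro ⟨a, ha | ha⟩
    · exact conn_mono_reach' subset_union_left (hcD.preconnected ⟨a, ha⟩ ⟨x, hxD⟩)
    · exact conn_mono_reach' subset_union_right (hcE.preconnected ⟨a, ha⟩ ⟨x, hxE⟩)
  exact ⟨fun a b => (hreach a).trans (hreach b).symm, ⟨⟨x, hx⟩⟩⟩

private lemma exists_component' {S : Set V} [Fintype V] (hCne : Cs.Nonempty)
    (hCconn : (G.induce Cs).Connected)
    (hCS : Cs ⊆ S) : ∃ D, IsComponentOf G S D ∧ Cs ⊆ D := by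
  have hfin : {E : Set V | Cs ⊆ E ∧ E ⊆ S ∧ (G.induce E).Connected}.Finite :=
    Set.toFinite _
  have hne : {E : Set V | Cs ⊆ E ∧ E ⊆ S ∧ (G.induce E).Connected}.Nonempty :=
    ⟨Cs, subset_rfl, hCS, hCconn⟩
  obtain ⟨D, hD, hmax⟩ := Set.Finite.exists_maximalFor id _ hfin hne
  obtain ⟨hCD, hDS, hDconn⟩ := hD
  refine ⟨D, ⟨hCne.mono hCD, hDS, hDconn, ?_⟩, hCD⟩
  intro D' h1 h2 h3
  exact subset_antisymm (hmax ⟨hCD.trans h1, h2, h3⟩ h1) h1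

private lemma exists_component_mem' {S : Set V} [Fintype V] {x : V} (hx : x ∈ S) :
    ∃ D, IsComponentOf G S D ∧ x ∈ D := by
  obtain ⟨D, hD, hsub⟩ := exists_component' (Set.singleton_nonempty x) (conn_singleton' x)
    (Set.singleton_subset_iff.mpr hx)
  exact ⟨D, hD, hsub rfl⟩

private lemma comp_closed' {S : Set V} (hD : IsComponentOf G S D) {x y : V}
    (hx : x ∈ D) (hy : y ∈ S) (hxy : G.Adj x y) : y ∈ D := by
  obtain ⟨hne, hDS, hconn, hmax⟩ := hD
  have := hmax (insert y D) (subset_insert _ _) (insert_subset hy hDS)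
    (conn_insert' hconn hx hxy)
  rw [← this]; exact mem_insert _ _

private lemma comp_absorb' {S : Set V} (hD : IsComponentOf G S D)
    (hCconn : (G.induce Cs).Connected)
    (hCS : Cs ⊆ S) (hne : (D ∩ Cs).Nonempty) : Cs ⊆ D := by
  obtain ⟨hDne, hDS, hconn, hmax⟩ := hD
  have := hmax (D ∪ Cs) subset_union_left (union_subset hDS hCS)
    (conn_union' hconn hCconn hne)
  rw [← this]; exact subset_union_right

private lemma crossing_edge' (hc : (G.induce D).Connected) {P : Set V} (hP : P ⊆ D)
    (hPne : P.Nonempty) (hrest : (D \ P).Nonempty) :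
    ∃ u ∈ P, ∃ v ∈ D \ P, G.Adj u v := by
  by_contra h
  push_neg at h
  obtain ⟨u, hu⟩ := hPne
  obtain ⟨v, hv⟩ := hrest
  have : ∀ z ∈ D, z ∈ P := by
    refine induce_invariant' hc (· ∈ P) (hP hu) hu ?_
    intro a b ha hb hab haP
    by_contra hbP
    exact h a haP b ⟨hb, hbP⟩ hab
  exact hv.2 (this v hv.1)

private lemma nnc_union' [Fintype V] {k : ℕ} (A : Fin k → Set V)
    (hnc : ∀ i j, i ≠ j → ∀ D, IsComponentOf G (A i ∪ A j) D →
      IsComponentOf G (A i) D ∨ IsComponentOf G (A j) D)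
    {D : Set V} (hD : IsComponentOf G (⋃ j, A j) D) : ∃ i, D ⊆ A i := by
  classical
  set F := {E : Set V | (∃ j, IsComponentOf G (A j) E) ∧ (E ∩ D).Nonempty} with hF
  have hFne : F.Nonempty := by
    obtain ⟨x, hx⟩ := hD.1
    obtain ⟨j, hxj⟩ := mem_iUnion.mp (hD.2.1 hx)
    obtain ⟨E, hE, hxE⟩ := exists_component_mem' hxj
    exact ⟨E, ⟨j, hE⟩, ⟨x, hxE, hx⟩⟩
  obtain ⟨E, hEF, hmax⟩ := Set.Finite.exists_maximalFor id F (Set.toFinite _) hFne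
  obtain ⟨⟨j, hEj⟩, hEDne⟩ := hEF
  have hED : E ⊆ D := comp_absorb' hD hEj.2.2.1
    (hEj.2.1.trans (subset_iUnion A j)) (by rwa [inter_comm] at hEDne)
  rcases eq_or_ssubset_of_subset hED with heq | hss
  · exact ⟨j, heq ▸ hEj.2.1⟩
  exfalso
  have hrest : (D \ E).Nonempty := diff_nonempty.mpr (fun h => hss.2 h)
  obtain ⟨u, huE, v, hvD, huv⟩ := crossing_edge' hD.2.2.1 hED hEj.1 hrest
  obtain ⟨l, hvl⟩ := mem_iUnion.mp (hD.2.1 hvD.1)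
  have hlj : l ≠ j := by
    rintro rfl
    exact hvD.2 (comp_closed' hEj huE hvl huv)
  have hconn2 : (G.induce (insert v E)).Connected := conn_insert' hEj.2.2.1 huE huv
  have hsub2 : insert v E ⊆ A j ∪ A l :=
    insert_subset (Or.inr hvl) (hEj.2.1.trans subset_union_left)
  obtain ⟨H, hH, hEH⟩ := exists_component' (insert_nonempty v E) hconn2 hsub2
  rcases hnc j l (fun h => hlj h.symm) H hH with hHj | hHl
  · have : H = E := hEj.2.2.2 H ((subset_insert v E).trans hEH) hHj.2.1 hHj.2.2.1
    exact hvD.2 (this ▸ hEH (mem_insert v E))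
  · have hHF : H ∈ F := ⟨⟨l, hHl⟩, ⟨u, hEH (mem_insert_of_mem _ huE), hED huE⟩⟩
    have : E = H := subset_antisymm ((subset_insert v E).trans hEH) (hmax hHF ((subset_insert v E).trans hEH))
    exact hvD.2 (this ▸ hEH (mem_insert v E))

variable [Fintype V] {w : V → ℝ}

private lemma fweight_eq_sum (w : V → ℝ) (X : Set V) :
    fweight w X = ∑ x ∈ (Set.toFinite X).toFinset, w x := by
  rw [fweight, ← finsum_mem_coe_finset, Set.Finite.coe_toFinset]

private lemma fweight_nonneg' (hw : ∀ v, 0 ≤ w v) (X : Set V) : 0 ≤ fweight w X := by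
  rw [fweight_eq_sum]; exact Finset.sum_nonneg fun i _ => hw i

private lemma fweight_mono' (hw : ∀ v, 0 ≤ w v) {X Y : Set V} (h : X ⊆ Y) :
    fweight w X ≤ fweight w Y := by
  rw [fweight_eq_sum, fweight_eq_sum]
  apply Finset.sum_le_sum_of_subset_of_nonneg
  · intro x hx
    simp only [Set.Finite.mem_toFinset] at *
    exact h hx
  · exact fun i _ _ => hw i

private lemma fweight_union_disj {X Y : Set V} (h : Disjoint X Y) :
    fweight w (X ∪ Y) = fweight w X + fweight w Y := by
  rw [fweight, fweight, fweight]
  exact finsum_mem_union h (Set.toFinite X) (Set.toFinite Y)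

private lemma fweight_union_le (hw : ∀ v, 0 ≤ w v) (X Y : Set V) :
    fweight w (X ∪ Y) ≤ fweight w X + fweight w Y := by
  have : X ∪ Y = X ∪ (Y \ X) := by rw [Set.union_diff_self]
  rw [this, fweight_union_disj disjoint_sdiff_right]
  exact add_le_add_right (fweight_mono' hw Set.diff_subset) _

private lemma fweight_biUnion_le (hw : ∀ v, 0 ≤ w v) {k : ℕ} (s : Fin k → Set V)
    (I : Finset (Fin k)) :
    fweight w (⋃ i ∈ I, s i) ≤ ∑ i ∈ I, fweight w (s i) := by
  classical
  induction I using Finset.induction with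
  | empty =>
    have : ⋃ i ∈ (∅ : Finset (Fin k)), s i = ∅ := by simp
    rw [this]; simp [fweight]
  | insert a I' hx ih =>
    rw [Finset.set_biUnion_insert, Finset.sum_insert hx]
    exact (fweight_union_le hw _ _).trans (add_le_add_right ih _)

private lemma fweight_split {k : ℕ} (w wS : V → ℝ) (vtx : Fin k → V)
    (hinj : Function.Injective vtx) (hwS2 : ∀ u, u ∉ Set.range vtx → wS u = w u)
    (D' : Set V) :
    fweight wS D' = fweight w D' +
      ∑ i ∈ (Set.toFinite {i | vtx i ∈ D'}).toFinset, (wS (vtx i) - w (vtx i)) := by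
  classical
  rw [fweight_eq_sum, fweight_eq_sum]
  have key : ∑ x ∈ (Set.toFinite D').toFinset, (wS x - w x)
      = ∑ i ∈ (Set.toFinite {i | vtx i ∈ D'}).toFinset, (wS (vtx i) - w (vtx i)) := by
    rw [← Finset.sum_filter_of_ne (p := fun x => x ∈ Set.range vtx)
      (fun x _ hne => by by_contra h; exact hne (by rw [hwS2 x h]; ring))]
    have himg : (Set.toFinite D').toFinset.filter (fun x => x ∈ Set.range vtx)
        = ((Set.toFinite {i | vtx i ∈ D'}).toFinset).image vtx := by
      ext x
      simp only [Finset.mem_filter, Finset.mem_image, Set.Finite.mem_toFinset,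
        Set.mem_range, Set.mem_setOf_eq]
      constructor
      · rintro ⟨hxD, i, rfl⟩; exact ⟨i, hxD, rfl⟩
      · rintro ⟨i, hi, rfl⟩; exact ⟨hi, i, rfl⟩
    rw [himg, Finset.sum_image (fun a _ b _ h => hinj h)]
  have := Finset.sum_sub_distrib (s := (Set.toFinite D').toFinset) (f := wS) (g := w)
  linarith [key ▸ this]

end Helpers

/-- a balanced separator of the central bag of a smooth collection of
(canonical-type) star separations extends to a balanced separator of G. -/
theorem stmt13 {V : Type} [Fintype V] (G : SimpleGraph V)
    (hC4 : HFree G (SimpleGraph.cycleGraph 4)) (hdia : HFree G diamond)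
    (hcc : ¬ HasCliqueCutset G)
    (w : V → ℝ) (hw : ∀ v, 0 ≤ w v ∧ w v ≤ 1) (hwt : fweight w Set.univ = 1)
    (c : ℝ) (hc : 1/2 ≤ c ∧ c < 1)
    (k : ℕ) (vtx : Fin k → V) (hinj : Function.Injective vtx)
    (A C B : Fin k → Set V)
    (hsep : ∀ i, IsSeparation G (A i) (C i) (B i))
    -- smoothness
    (hnc : ∀ i j, i ≠ j → ∀ D, IsComponentOf G (A i ∪ A j) D →
      IsComponentOf G (A i) D ∨ IsComponentOf G (A j) D)
    (hCi : ∀ i, vtx i ∈ C i ∧ C i ⊆ closedNbr G (vtx i))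
    (hvA : ∀ i j, vtx i ∉ A j)
    -- each vtx i is unbalanced and B i is the largest-weight component of G \ N[vtx i]
    (hBcomp : ∀ i, IsComponentOf G ((closedNbr G (vtx i))ᶜ) (B i) ∧
      1/2 < fweight w (B i))
    (hAsmall : ∀ i, fweight w (A i) ≤ 1/2)
    -- the central bag and the inherited weight function
    (β : Set V) (hβ : β = ⋂ i, (B i ∪ C i))
    (Astar : Fin k → Set V)
    (hAstar : ∀ i, Astar i = ⋃₀ {D | IsComponentOf G (⋃ j, A j) D ∧ D ⊆ A i ∧
      ∀ j, j < i → ¬ D ⊆ A j})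
    (wS : V → ℝ)
    (hwS1 : ∀ i, wS (vtx i) = w (vtx i) + fweight w (Astar i))
    (hwS2 : ∀ u, u ∉ Set.range vtx → wS u = w u)
    -- X is a balanced separator of the central bag
    (X : Set V) (hX : X ⊆ β)
    (hXsep : ∀ D, IsComponentOf G (β \ X) D → fweight wS D ≤ c) :
    ∀ D, IsComponentOf G ((X ∪ (closedNbrSet G (X ∩ Set.range vtx) ∩ β))ᶜ) D →
      fweight w D ≤ c := by
  classical
  -- basic structural facts
  have hwnn : ∀ v, 0 ≤ w v := fun v => (hw v).1
  have hAeq : ∀ i, A i = (B i ∪ C i)ᶜ := by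
    intro i
    obtain ⟨huniv, hAC, hAB, hCB, hanti⟩ := hsep i
    ext x
    constructor
    · intro hx
      simp only [Set.mem_compl_iff, Set.mem_union]
      push_neg
      exact ⟨fun hB => Set.disjoint_left.mp hAB hx hB,
        fun hC => Set.disjoint_left.mp hAC hx hC⟩
    · intro hx
      simp only [Set.mem_compl_iff, Set.mem_union] at hx
      push_neg at hx
      have : x ∈ A i ∪ C i ∪ B i := huniv ▸ Set.mem_univ x
      rcases this with (h | h) | h
      · exact h
      · exact absurd h hx.2
      · exact absurd h hx.1
  have hUbeta : βᶜ = ⋃ j, A j := by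
    rw [hβ, Set.compl_iInter]
    exact iUnion_congr fun i => (hAeq i).symm
  have hvtxβ : ∀ i, vtx i ∈ β := by
    intro i
    rw [hβ, Set.mem_iInter]
    intro j
    have : vtx i ∉ (B j ∪ C j)ᶜ := fun h => hvA i j ((hAeq j) ▸ h)
    exact Set.notMem_compl_iff.mp this
  have hmemU : ∀ x : V, x ∈ β → x ∉ ⋃ j, A j := by
    intro x hx
    rw [← hUbeta]
    exact fun h => h hx
  set Y : Set V := X ∪ (closedNbrSet G (X ∩ Set.range vtx) ∩ β) with hYdef
  have hYβ : Y ⊆ β := Set.union_subset hX Set.inter_subset_right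
  intro D hD
  have hDY : D ⊆ Yᶜ := hD.2.1
  have hUY : (⋃ j, A j) ⊆ Yᶜ := by
    rw [← hUbeta]
    exact Set.compl_subset_compl.mpr hYβ
  -- facts about components of the union of the A's
  have hout : ∀ D₀, IsComponentOf G (⋃ j, A j) D₀ → ∀ i, D₀ ⊆ A i →
      ∀ x y, x ∈ D₀ → y ∉ D₀ → G.Adj x y → y ∈ C i ∧ y ∈ β := by
    intro D₀ hD₀ i hsubi x y hx hy hxy
    have hyU : y ∉ ⋃ j, A j := fun hyU => hy (comp_closed' hD₀ hx hyU hxy)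
    have hyβ : y ∈ β := by
      by_contra hyβ
      exact hyU (hUbeta ▸ hyβ)
    refine ⟨?_, hyβ⟩
    have : y ∈ A i ∪ C i ∪ B i := (hsep i).1 ▸ Set.mem_univ y
    rcases this with (h | h) | h
    · exact absurd (Set.mem_iUnion.mpr ⟨i, h⟩) hyU
    · exact h
    · exact absurd hxy ((hsep i).2.2.2.2 x (hsubi hx) y h)
  -- minimal index and A* containment
  have hAstarmem : ∀ D₀, IsComponentOf G (⋃ j, A j) D₀ →
      ∃ i, D₀ ⊆ A i ∧ D₀ ⊆ Astar i := by
    intro D₀ hD₀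
    obtain ⟨i, hi⟩ := nnc_union' A hnc hD₀
    obtain ⟨i₀, hi₀mem, hi₀min⟩ := Finset.exists_min_image
      ((Set.toFinite {j | D₀ ⊆ A j}).toFinset) id ⟨i, by simpa using hi⟩
    simp only [Set.Finite.mem_toFinset, Set.mem_setOf_eq] at hi₀mem
    refine ⟨i₀, hi₀mem, ?_⟩
    rw [hAstar i₀]
    refine Set.subset_sUnion_of_mem ⟨hD₀, hi₀mem, ?_⟩
    intro j hj hcon
    have := hi₀min j (by simpa using hcon)
    simp only [id] at this
    exact absurd (lt_of_lt_of_le hj this) (lt_irrefl j)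
  rcases (D ∩ β).eq_empty_or_nonempty with hDβ | hDβ
  · -- Case A : D avoids the central bag
    have hDU : D ⊆ ⋃ j, A j := by
      rw [← hUbeta]
      intro x hx
      exact fun hxβ => (Set.eq_empty_iff_forall_notMem.mp hDβ x) ⟨hx, hxβ⟩
    have hDcomp : IsComponentOf G (⋃ j, A j) D :=
      ⟨hD.1, hDU, hD.2.2.1, fun D' h1 h2 h3 => hD.2.2.2 D' h1 (h2.trans hUY) h3⟩
    obtain ⟨i, hi⟩ := nnc_union' A hnc hDcomp
    calc fweight w D ≤ fweight w (A i) := fweight_mono' hwnn hi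
      _ ≤ 1/2 := hAsmall i
      _ ≤ c := hc.1
  · -- Case B : D meets the central bag
    obtain ⟨u, huD, huβ⟩ := hDβ
    have huX : u ∉ X := fun h => hDY huD (Or.inl h)
    obtain ⟨D', hD', huD'⟩ := exists_component_mem' (S := β \ X) ⟨huβ, huX⟩
    have hD'β : D' ⊆ β \ X := hD'.2.1
    -- key step : pulling the apex of a separation into D'
    have hvtxD' : ∀ i p, p ∈ D → p ∈ C i → p ∈ D' → vtx i ∈ D' := by
      intro i p hpD hpC hpD'
      have hpNv : p ∈ closedNbr G (vtx i) := (hCi i).2 hpC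
      have hvX : vtx i ∉ X := by
        intro hvX
        have hpβ : p ∈ β := (hD'β hpD').1
        have hpY : p ∈ Y := by
          rcases hpNv with rfl | hadj
          · exact Or.inr ⟨Or.inl ⟨hvX, Set.mem_range_self i⟩, hpβ⟩
          · by_cases hpX : p ∈ X ∩ Set.range vtx
            · exact Or.inr ⟨Or.inl hpX, hpβ⟩
            · exact Or.inr ⟨Or.inr ⟨hpX, vtx i, ⟨hvX, Set.mem_range_self i⟩, hadj⟩, hpβ⟩
        exact hDY hpD hpY
      rcases hpNv with rfl | hadj
      · exact hpD'
      · have hadj' : G.Adj (vtx i) p := hadj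
        exact comp_closed' hD' hpD' ⟨hvtxβ i, hvX⟩ hadj'.symm
    -- the invariant along D
    set Q : V → Prop := fun x => x ∈ D' ∨ ∃ D₀, IsComponentOf G (⋃ j, A j) D₀ ∧
      x ∈ D₀ ∧ ∃ p q, q ∈ D₀ ∧ G.Adj q p ∧ p ∈ D' ∧ p ∈ D with hQdef
    have hstep : ∀ a b, a ∈ D → b ∈ D → G.Adj a b → Q a → Q b := by
      intro a b haD hbD hab hQa
      have hbX : b ∉ X := fun h => hDY hbD (Or.inl h)
      rcases hQa with haD' | ⟨D₀, hD₀, haD₀, p, q, hqD₀, hqp, hpD', hpD⟩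
      · by_cases hbβ : b ∈ β
        · exact Or.inl (comp_closed' hD' haD' ⟨hbβ, hbX⟩ hab)
        · have hbU : b ∈ ⋃ j, A j := hUbeta ▸ hbβ
          obtain ⟨D₀, hD₀, hbD₀⟩ := exists_component_mem' hbU
          exact Or.inr ⟨D₀, hD₀, hbD₀, a, b, hbD₀, G.adj_symm hab, haD', haD⟩
      · by_cases hbU : b ∈ ⋃ j, A j
        · exact Or.inr ⟨D₀, hD₀, comp_closed' hD₀ haD₀ hbU hab, p, q, hqD₀, hqp,
            hpD', hpD⟩
        · have hbD₀ : b ∉ D₀ := fun h => hbU (hD₀.2.1 h)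
          obtain ⟨i, hiA, _⟩ := hAstarmem D₀ hD₀
          obtain ⟨hbC, hbβ⟩ := hout D₀ hD₀ i hiA a b haD₀ hbD₀ hab
          have hpD₀ : p ∉ D₀ := fun h => hmemU p (hD'β hpD').1 (hD₀.2.1 h)
          have hpC : p ∈ C i := (hout D₀ hD₀ i hiA q p hqD₀ hpD₀ hqp).1
          have hvD' : vtx i ∈ D' := hvtxD' i p hpD hpC hpD'
          have hbNv : b ∈ closedNbr G (vtx i) := (hCi i).2 hbC
          rcases hbNv with rfl | hadj
          · exact Or.inl hvD'
          · have hadj' : G.Adj (vtx i) b := hadj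
            exact Or.inl (comp_closed' hD' hvD' ⟨hbβ, hbX⟩ hadj')
    have hQall : ∀ v ∈ D, Q v :=
      induce_invariant' hD.2.2.1 Q huD (Or.inl huD') hstep
    -- consequences of the invariant
    have hDβD' : D ∩ β ⊆ D' := by
      rintro x ⟨hxD, hxβ⟩
      rcases hQall x hxD with h | ⟨D₀, hD₀, hxD₀, _⟩
      · exact h
      · exact absurd (hD₀.2.1 hxD₀) (hmemU x hxβ)
    set I : Finset (Fin k) := (Set.toFinite {i | vtx i ∈ D'}).toFinset with hIdef
    have hDdiff : D \ β ⊆ ⋃ i ∈ I, Astar i := by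
      rintro x ⟨hxD, hxβ⟩
      rcases hQall x hxD with h | ⟨D₀, hD₀, hxD₀, p, q, hqD₀, hqp, hpD', hpD⟩
      · exact absurd ((hD'β h).1) hxβ
      · obtain ⟨i, hiA, hiAstar⟩ := hAstarmem D₀ hD₀
        have hpD₀ : p ∉ D₀ := fun h => hmemU p (hD'β hpD').1 (hD₀.2.1 h)
        have hpC : p ∈ C i := (hout D₀ hD₀ i hiA q p hqD₀ hpD₀ hqp).1
        have hvD' : vtx i ∈ D' := hvtxD' i p hpD hpC hpD'
        refine Set.mem_biUnion ?_ (hiAstar hxD₀)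
        exact (Set.Finite.mem_toFinset _).mpr hvD'
    -- the weight computation
    have hsplit : fweight w D = fweight w (D ∩ β) + fweight w (D \ β) := by
      have hdecomp : D = (D ∩ β) ∪ (D \ β) := (Set.inter_union_diff D β).symm
      have hdisj : Disjoint (D ∩ β) (D \ β) :=
        Set.disjoint_sdiff_right.mono_left Set.inter_subset_right
      conv_lhs => rw [hdecomp]
      exact fweight_union_disj hdisj
    have hb1 : fweight w (D ∩ β) ≤ fweight w D' := fweight_mono' hwnn hDβD'
    have hb2 : fweight w (D \ β) ≤ ∑ i ∈ I, fweight w (Astar i) :=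
      (fweight_mono' hwnn hDdiff).trans (fweight_biUnion_le hwnn Astar I)
    have hident : fweight wS D' = fweight w D' + ∑ i ∈ I, fweight w (Astar i) := by
      rw [fweight_split w wS vtx hinj hwS2 D']
      congr 1
      refine Finset.sum_congr rfl ?_
      intro i _
      rw [hwS1 i]; ring
    have hfin : fweight wS D' ≤ c := hXsep D' hD'
    linarith

end Paper
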